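/- In the change-point setting, suppose Q_{t−K+1} = ⋯ = Q_t (all with common continuous CDF F_t) for some K ∈ [t−1], each period contributing B_j i.i.d. samples, and let q̂_{t,K} be the left (1−α)-quantile of the empirical CDF of the pooled B_{t,K} samples from the last K periods. Then for δ ∈ (0,1), with probability at least 1 − δ: |F_t(q̂_{t,K}) − (1−α)| ≤ (5/4)√(2α(1−α)log(2/δ)/B_{t,K}) + 4·log(2/δ)/B_{t,K}. -/

import Mathlib

open MeasureTheory ProbabilityTheory

noncomputable def Qminus (γ : ℝ) (F : ℝ → ℝ) : ℝ := sInf {x | γ ≤ F x}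

open Filter Topology
open scoped ENNReal

private lemma fact_ge_aux : ∀ k : ℕ, 2 * 3 ^ k ≤ (k + 2).factorial := by
  intro k
  induction k with
  | zero => norm_num
  | succ n ih =>
      have h1 : (n + 3).factorial = (n + 3) * (n + 2).factorial := rfl
      have h2 : 2 * 3 ^ (n + 1) = 3 * (2 * 3 ^ n) := by ring
      have h3 : 3 * (2 * 3 ^ n) ≤ 3 * (n + 2).factorial := by omega
      have h4 : 3 * (n + 2).factorial ≤ (n + 3) * (n + 2).factorial :=
        Nat.mul_le_mul_right _ (by omega)
      show 2 * 3 ^ (n + 1) ≤ (n + 3).factorial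
      omega

private lemma exp_series_split (x : ℝ) :
    Real.exp x = 1 + x + ∑' k : ℕ, x ^ (k + 2) / (k + 2).factorial := by
  have h : Real.exp x = ∑' n : ℕ, x ^ n / n.factorial := by
    rw [Real.exp_eq_exp_ℝ, NormedSpace.exp_eq_tsum_div]
  have hs : Summable (fun n : ℕ => x ^ n / n.factorial) := Real.summable_pow_div_factorial x
  have hs1 : Summable (fun n : ℕ => x ^ (n + 1) / (n + 1).factorial) :=
    (summable_nat_add_iff 1).mpr hs
  rw [h, hs.tsum_eq_zero_add, hs1.tsum_eq_zero_add]
  simp [Nat.factorial]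
  ring

private lemma exp_le_quad {y s : ℝ} (hy : |y| ≤ 1) (hs : 0 ≤ s) (hs3 : s < 3) :
    Real.exp (s * y) ≤ 1 + s * y + y ^ 2 * (s ^ 2 / (2 * (1 - s / 3))) := by
  have hgeo : Summable (fun k : ℕ => (y ^ 2 * (s ^ 2 / 2)) * (s / 3) ^ k) := by
    apply Summable.mul_left
    exact summable_geometric_of_lt_one (by positivity) (by linarith)
  have hsum : Summable (fun k : ℕ => (s * y) ^ (k + 2) / (k + 2).factorial) :=
    (summable_nat_add_iff 2).mpr (Real.summable_pow_div_factorial (s * y))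
  have hterm : ∀ k : ℕ, (s * y) ^ (k + 2) / (k + 2).factorial
      ≤ (y ^ 2 * (s ^ 2 / 2)) * (s / 3) ^ k := by
    intro k
    have h1 : (s * y) ^ (k + 2) ≤ s ^ (k + 2) * y ^ 2 := by
      have : (s * y) ^ (k + 2) ≤ |(s * y) ^ (k + 2)| := le_abs_self _
      have habs : |(s * y) ^ (k + 2)| = s ^ (k + 2) * |y| ^ (k + 2) := by
        rw [abs_pow, abs_mul, abs_of_nonneg hs, mul_pow]
      have hy2 : |y| ^ (k + 2) ≤ |y| ^ 2 :=
        pow_le_pow_of_le_one (abs_nonneg y) hy (by omega)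
      calc (s * y) ^ (k + 2) ≤ s ^ (k + 2) * |y| ^ (k + 2) := by rw [← habs]; exact le_abs_self _
        _ ≤ s ^ (k + 2) * |y| ^ 2 := by
            exact mul_le_mul_of_nonneg_left hy2 (by positivity)
        _ = s ^ (k + 2) * y ^ 2 := by rw [sq_abs]
    have h2 : ((2 : ℝ) * 3 ^ k) ≤ ((k + 2).factorial : ℝ) := by
      exact_mod_cast fact_ge_aux k
    have h3 : s ^ (k + 2) / ((k + 2).factorial : ℝ) ≤ s ^ (k + 2) / (2 * 3 ^ k) :=
      div_le_div_of_nonneg_left (by positivity) (by positivity) h2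
    calc (s * y) ^ (k + 2) / ((k + 2).factorial : ℝ)
        ≤ s ^ (k + 2) * y ^ 2 / ((k + 2).factorial : ℝ) := by
          apply div_le_div_of_nonneg_right ?_ ?_ |>.trans_eq rfl
          · exact h1
          · positivity
      _ = y ^ 2 * (s ^ (k + 2) / ((k + 2).factorial : ℝ)) := by ring
      _ ≤ y ^ 2 * (s ^ (k + 2) / (2 * 3 ^ k)) := by
          exact mul_le_mul_of_nonneg_left h3 (by positivity)
      _ = (y ^ 2 * (s ^ 2 / 2)) * (s / 3) ^ k := by
          rw [div_pow]; ring
  have htsum : ∑' k : ℕ, (s * y) ^ (k + 2) / (k + 2).factorial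
      ≤ ∑' k : ℕ, (y ^ 2 * (s ^ 2 / 2)) * (s / 3) ^ k := Summable.tsum_le_tsum hterm hsum hgeo
  have hgeoval : ∑' k : ℕ, (y ^ 2 * (s ^ 2 / 2)) * (s / 3) ^ k
      = (y ^ 2 * (s ^ 2 / 2)) * (1 - s / 3)⁻¹ := by
    rw [tsum_mul_left, tsum_geometric_of_lt_one (by positivity) (by linarith)]
  have hfin : (y ^ 2 * (s ^ 2 / 2)) * (1 - s / 3)⁻¹ = y ^ 2 * (s ^ 2 / (2 * (1 - s / 3))) := by
    field_simp
  rw [exp_series_split (s * y)]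
  nlinarith [htsum, hgeoval.symm.trans_le (le_of_eq rfl)]

private lemma mgf_indicator_le {Ω : Type*} [MeasurableSpace Ω] (μ : Measure Ω)
    [IsProbabilityMeasure μ] (A : Set Ω) (hA : MeasurableSet A) (ε τ : ℝ)
    (hε : ε = 1 ∨ ε = -1) (hτ0 : 0 ≤ τ) (hτ3 : τ < 3) :
    mgf (fun ω => ε * (A.indicator (fun _ => (1 : ℝ)) ω - (μ A).toReal)) μ τ
      ≤ Real.exp ((μ A).toReal * (1 - (μ A).toReal) * (τ ^ 2 / (2 * (1 - τ / 3)))) := by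
  set p : ℝ := (μ A).toReal with hp
  have hp0 : 0 ≤ p := ENNReal.toReal_nonneg
  have hp1 : p ≤ 1 := by
    rw [hp]
    exact ENNReal.toReal_le_of_le_ofReal zero_le_one (by simpa using prob_le_one)
  have hcompl : (μ Aᶜ).toReal = 1 - p := by
    rw [measure_compl hA (measure_ne_top μ A),
      ENNReal.toReal_sub_of_le (measure_mono (Set.subset_univ A)) (measure_ne_top μ _)]
    simp [hp]
  have hfun : (fun ω => Real.exp (τ * (ε * (A.indicator (fun _ => (1 : ℝ)) ω - p))))
      = fun ω => Set.indicator A (fun _ => Real.exp (τ * (ε * (1 - p)))) ω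
        + Set.indicator Aᶜ (fun _ => Real.exp (τ * (ε * (0 - p)))) ω := by
    funext ω
    by_cases h : ω ∈ A
    · rw [Set.indicator_of_mem h, Set.indicator_of_mem h,
        Set.indicator_of_notMem (by simpa using h)]
      ring_nf
    · rw [Set.indicator_of_notMem h, Set.indicator_of_notMem h,
        Set.indicator_of_mem (by simpa using h)]
      ring_nf
  have hmgf : mgf (fun ω => ε * (A.indicator (fun _ => (1 : ℝ)) ω - p)) μ τ
      = Real.exp (τ * (ε * (1 - p))) * p + Real.exp (τ * (ε * (0 - p))) * (1 - p) := by
    rw [mgf]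
    rw [show (fun ω => Real.exp (τ * (ε * (A.indicator (fun _ => (1:ℝ)) ω - p)))) = _ from hfun]
    rw [integral_add ((integrable_const _).indicator hA) ((integrable_const _).indicator hA.compl)]
    rw [integral_indicator_const _ hA, integral_indicator_const _ hA.compl]
    rw [measureReal_def, measureReal_def, hcompl, ← hp]
    simp [smul_eq_mul, mul_comm]
  have hε2 : ε ^ 2 = 1 := by rcases hε with h | h <;> rw [h] <;> norm_num
  have hεabs : |ε| = 1 := by rcases hε with h | h <;> rw [h] <;> norm_num
  set c : ℝ := τ ^ 2 / (2 * (1 - τ / 3)) with hc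
  have hc0 : 0 ≤ c := by
    have h3 : 0 < 1 - τ / 3 := by linarith
    rw [hc]; positivity
  have h1 : Real.exp (τ * (ε * (1 - p))) ≤ 1 + τ * (ε * (1 - p)) + (ε * (1 - p)) ^ 2 * c :=
    exp_le_quad (by rw [abs_mul, hεabs, one_mul, abs_of_nonneg (by linarith)]; linarith) hτ0 hτ3
  have h2 : Real.exp (τ * (ε * (0 - p))) ≤ 1 + τ * (ε * (0 - p)) + (ε * (0 - p)) ^ 2 * c :=
    exp_le_quad (by rw [abs_mul, hεabs, one_mul, abs_of_nonpos (by linarith)]; linarith) hτ0 hτ3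
  have e1 := mul_le_mul_of_nonneg_right h1 hp0
  have e2 := mul_le_mul_of_nonneg_right h2 (by linarith : (0:ℝ) ≤ 1 - p)
  have heq : (1 + τ * (ε * (1 - p)) + (ε * (1 - p)) ^ 2 * c) * p
      + (1 + τ * (ε * (0 - p)) + (ε * (0 - p)) ^ 2 * c) * (1 - p) = 1 + p * (1 - p) * c := by
    linear_combination (c * p * (1 - p)) * hε2
  have hcomb := (add_le_add e1 e2).trans_eq heq
  have hfinal : 1 + p * (1 - p) * c ≤ Real.exp (p * (1 - p) * c) := by
    linarith [Real.add_one_le_exp (p * (1 - p) * c)]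
  rw [hmgf]
  exact hcomb.trans hfinal

private lemma chernoff_sum_le {Ω ι : Type*} [MeasurableSpace Ω] {μ : Measure Ω}
    [IsProbabilityMeasure μ] (X : ι → Ω → ℝ) (hXmeas : ∀ i, Measurable (X i))
    (hind : iIndepFun X μ) (S : Finset ι) (cthr q ε : ℝ)
    (hε : ε = 1 ∨ ε = -1)
    (hq : ∀ i ∈ S, (μ {ω | X i ω ≤ cthr}).toReal = q)
    (v : ℝ) (hv : q * (1 - q) ≤ v) (x τ : ℝ) (hτ0 : 0 ≤ τ) (hτ3 : τ < 3) :
    (μ {ω | x ≤ ∑ i ∈ S, ε * (({ω' | X i ω' ≤ cthr}).indicator (fun _ => (1:ℝ)) ω - q)}).toReal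
      ≤ Real.exp (-τ * x + (S.card : ℝ) * (v * (τ ^ 2 / (2 * (1 - τ / 3))))) := by
  classical
  set Z : ι → Ω → ℝ :=
    fun i ω => ε * (({ω' | X i ω' ≤ cthr}).indicator (fun _ => (1:ℝ)) ω - q) with hZ
  have hA : ∀ i, MeasurableSet {ω | X i ω ≤ cthr} := fun i => (hXmeas i) measurableSet_Iic
  have hZmeas : ∀ i, Measurable (Z i) := by
    intro i
    apply Measurable.const_mul
    exact ((measurable_const.indicator (hA i)).sub measurable_const)
  -- independence of the Z's
  have hZind : iIndepFun Z μ := by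
    have h := hind.comp (fun _ (y : ℝ) => ε * ((Set.Iic cthr).indicator (fun _ => (1:ℝ)) y - q))
      (fun i => ((measurable_const.indicator measurableSet_Iic).sub measurable_const).const_mul ε)
    have he : Z = fun i =>
        (fun y : ℝ => ε * ((Set.Iic cthr).indicator (fun _ => (1:ℝ)) y - q)) ∘ X i := by
      funext i ω
      simp only [hZ, Function.comp_apply, Set.indicator_apply, Set.mem_setOf_eq, Set.mem_Iic]
    rw [he]
    exact h
  -- integrability of exp (τ * ∑ Z)
  have hZbdd : ∀ i ω, |Z i ω| ≤ 1 + |q| := by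
    intro i ω
    rw [hZ]
    simp only
    rw [abs_mul]
    have : |ε| = 1 := by rcases hε with h | h <;> rw [h] <;> norm_num
    rw [this, one_mul]
    refine (abs_sub _ _).trans ?_
    gcongr
    by_cases h : ω ∈ {ω' | X i ω' ≤ cthr}
    · rw [Set.indicator_of_mem h]; norm_num
    · rw [Set.indicator_of_notMem h]; norm_num
  have hsum_bdd : ∀ ω, |∑ i ∈ S, Z i ω| ≤ (S.card : ℝ) * (1 + |q|) := by
    intro ω
    calc |∑ i ∈ S, Z i ω| ≤ ∑ i ∈ S, |Z i ω| := Finset.abs_sum_le_sum_abs _ _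
      _ ≤ ∑ _i ∈ S, (1 + |q|) := Finset.sum_le_sum (fun i _ => hZbdd i ω)
      _ = (S.card : ℝ) * (1 + |q|) := by rw [Finset.sum_const, nsmul_eq_mul]
  have hint : Integrable (fun ω => Real.exp (τ * ∑ i ∈ S, Z i ω)) μ := by
    refine Integrable.mono' (integrable_const (Real.exp (τ * ((S.card : ℝ) * (1 + |q|)))))
      ?_ (Filter.Eventually.of_forall fun ω => ?_)
    · exact ((Finset.measurable_sum S fun i _ => hZmeas i).const_mul τ).exp.aestronglyMeasurable
    · rw [Real.norm_eq_abs, Real.abs_exp]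
      apply Real.exp_le_exp.mpr
      calc τ * ∑ i ∈ S, Z i ω ≤ |τ * ∑ i ∈ S, Z i ω| := le_abs_self _
        _ = τ * |∑ i ∈ S, Z i ω| := by rw [abs_mul, abs_of_nonneg hτ0]
        _ ≤ τ * ((S.card : ℝ) * (1 + |q|)) := by
            exact mul_le_mul_of_nonneg_left (hsum_bdd ω) hτ0
  -- Chernoff
  have hch := measure_ge_le_exp_mul_mgf (μ := μ) (X := fun ω => ∑ i ∈ S, Z i ω) x hτ0 hint
  have hmgfsum : mgf (fun ω => ∑ i ∈ S, Z i ω) μ τ = ∏ i ∈ S, mgf (Z i) μ τ := by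
    have := hZind.mgf_sum hZmeas S (t := τ)
    convert this using 2
    · funext ω; simp
  have hfac : ∀ i ∈ S, mgf (Z i) μ τ ≤ Real.exp (v * (τ ^ 2 / (2 * (1 - τ / 3)))) := by
    intro i hi
    have h := mgf_indicator_le μ {ω | X i ω ≤ cthr} (hA i) ε τ hε hτ0 hτ3
    rw [hq i hi] at h
    refine h.trans (Real.exp_le_exp.mpr ?_)
    have hc0 : (0:ℝ) ≤ τ ^ 2 / (2 * (1 - τ / 3)) := by
      have h3 : 0 < 1 - τ / 3 := by linarith
      positivity
    exact mul_le_mul_of_nonneg_right hv hc0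
  have hprod : ∏ i ∈ S, mgf (Z i) μ τ
      ≤ Real.exp ((S.card : ℝ) * (v * (τ ^ 2 / (2 * (1 - τ / 3))))) := by
    calc ∏ i ∈ S, mgf (Z i) μ τ ≤ ∏ _i ∈ S, Real.exp (v * (τ ^ 2 / (2 * (1 - τ / 3)))) :=
          Finset.prod_le_prod (fun i _ => mgf_nonneg) hfac
      _ = Real.exp ((S.card : ℝ) * (v * (τ ^ 2 / (2 * (1 - τ / 3))))) := by
          rw [Finset.prod_const, ← Real.exp_nat_mul]
  calc (μ {ω | x ≤ ∑ i ∈ S, ε * (({ω' | X i ω' ≤ cthr}).indicator (fun _ => (1:ℝ)) ω - q)}).toReal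
      ≤ Real.exp (-τ * x) * mgf (fun ω => ∑ i ∈ S, Z i ω) μ τ := hch
    _ ≤ Real.exp (-τ * x) * Real.exp ((S.card : ℝ) * (v * (τ ^ 2 / (2 * (1 - τ / 3))))) := by
        rw [hmgfsum]
        exact mul_le_mul_of_nonneg_left hprod (Real.exp_nonneg _)
    _ = Real.exp (-τ * x + (S.card : ℝ) * (v * (τ ^ 2 / (2 * (1 - τ / 3))))) := by
        rw [← Real.exp_add]

private lemma exponent_eq {V x : ℝ} (hV : 0 < V) (hx : 0 < x) :
    -(x / (V + x / 3)) * x + V * ((x / (V + x / 3)) ^ 2 / (2 * (1 - (x / (V + x / 3)) / 3)))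
      = -(x ^ 2 / (2 * (V + x / 3))) := by
  have hD : 0 < V + x / 3 := by linarith
  have h1 : 1 - (x / (V + x / 3)) / 3 = V / (V + x / 3) := by
    field_simp
    ring
  rw [h1]
  field_simp
  ring

private lemma numeric_bound {a L b u e : ℝ} (ha0 : 0 < a) (ha1 : a < 1) (hL : 0 < L)
    (hb : 1 ≤ b) (hu0 : 0 ≤ u) (hu2 : u ^ 2 = 2 * a * (1 - a) * L / b)
    (he : e = (5 / 4) * u + 4 * L / b) :
    2 * L * ((b * (a * (1 - a) + e)) + (e * b) / 3) ≤ (e * b) ^ 2 := by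
  have hb0 : 0 < b := by linarith
  have hbu : u ^ 2 * b = 2 * a * (1 - a) * L := by
    rw [hu2]; field_simp
  have heb : e * b = (5 / 4) * u * b + 4 * L := by
    rw [he]; field_simp
  have h2 : u ^ 2 * b ^ 2 = 2 * a * (1 - a) * L * b := by linear_combination b * hbu
  have h3 : (e * b) ^ 2 = (5 / 4 * u * b + 4 * L) ^ 2 := by rw [heb]
  have h4 : L * (e * b) = L * (5 / 4 * u * b + 4 * L) := by rw [heb]
  nlinarith [h2, h3, h4, mul_nonneg (mul_nonneg hu0 hb0.le) hL.le, sq_nonneg (u * b),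
    sq_nonneg L]

private lemma cdf_surjective {Ω : Type*} [MeasurableSpace Ω] (μ : Measure Ω)
    [IsProbabilityMeasure μ] (X : Ω → ℝ) (hX : Measurable X) (G : ℝ → ℝ)
    (hG : ∀ s, G s = (μ {ω | X ω ≤ s}).toReal) (hcont : Continuous G)
    (c : ℝ) (hc0 : 0 < c) (hc1 : c < 1) : ∃ x, G x = c := by
  set ν : Measure ℝ := μ.map X with hν
  haveI : IsProbabilityMeasure ν := Measure.isProbabilityMeasure_map hX.aemeasurable
  have hGc : ∀ s, G s = cdf ν s := by
    intro s
    rw [hG, cdf_eq_real, measureReal_def, hν, Measure.map_apply hX measurableSet_Iic]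
    rfl
  have hmono : Monotone G := by
    intro s1 s2 h
    rw [hG, hG]
    exact ENNReal.toReal_mono (measure_ne_top μ _)
      (measure_mono (fun ω hω => le_trans hω h))
  have hbot : Tendsto G atBot (𝓝 0) := by
    rw [show G = fun s => cdf ν s from funext hGc]
    exact tendsto_cdf_atBot ν
  have htop : Tendsto G atTop (𝓝 1) := by
    rw [show G = fun s => cdf ν s from funext hGc]
    exact tendsto_cdf_atTop ν
  obtain ⟨a, ha⟩ := (hbot.eventually_lt_const hc0).exists
  obtain ⟨b, hb⟩ := (htop.eventually_const_lt hc1).exists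
  have hab : min a b ≤ b := min_le_right a b
  have h1 : G (min a b) ≤ G a := hmono (min_le_left a b)
  obtain ⟨x, _, hx⟩ := intermediate_value_Icc hab hcont.continuousOn
    ⟨by linarith, hb.le⟩
  exact ⟨x, hx⟩

private lemma chernoff_half {Ω ι : Type*} [MeasurableSpace Ω] {μ : Measure Ω}
    [IsProbabilityMeasure μ] (X : ι → Ω → ℝ) (hXmeas : ∀ i, Measurable (X i))
    (hind : iIndepFun X μ) (S : Finset ι) (c q εs : ℝ)
    (hεs : εs = 1 ∨ εs = -1) (hq : ∀ i ∈ S, (μ {ω | X i ω ≤ c}).toReal = q)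
    (a L b u e δ : ℝ) (ha0 : 0 < a) (ha1 : a < 1) (hL : 0 < L) (hδ0 : 0 < δ)
    (hb : 1 ≤ b) (hcard : (S.card : ℝ) = b) (hu0 : 0 ≤ u)
    (hu2 : u ^ 2 = 2 * a * (1 - a) * L / b) (he : e = (5 / 4) * u + 4 * L / b)
    (hLδ : L = Real.log (2 / δ)) (hv : q * (1 - q) ≤ a * (1 - a) + e) :
    (μ {ω | e * b ≤ ∑ i ∈ S,
        εs * (({ω' | X i ω' ≤ c}).indicator (fun _ => (1:ℝ)) ω - q)}).toReal ≤ δ / 2 := by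
  have hb0 : (0 : ℝ) < b := by linarith
  have he0 : 0 < e := by
    have h4 : 0 < 4 * L / b := by positivity
    nlinarith
  have hx : (0 : ℝ) < e * b := by positivity
  have hV : (0 : ℝ) < b * (a * (1 - a) + e) := by
    have h1 : 0 < a * (1 - a) := mul_pos ha0 (by linarith)
    nlinarith
  set x : ℝ := e * b
  set V : ℝ := b * (a * (1 - a) + e)
  have hD : 0 < V + x / 3 := by linarith
  set τ : ℝ := x / (V + x / 3) with hτdef
  have hτ0 : 0 ≤ τ := by positivity
  have hτ3 : τ < 3 := by rw [hτdef, div_lt_iff₀ hD]; linarith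
  have h := chernoff_sum_le X hXmeas hind S c q εs hεs hq (a * (1 - a) + e) hv x τ hτ0 hτ3
  rw [hcard] at h
  have h2 : -τ * x + b * ((a * (1 - a) + e) * (τ ^ 2 / (2 * (1 - τ / 3))))
      = -(x ^ 2 / (2 * (V + x / 3))) := by
    rw [hτdef, ← exponent_eq hV hx]
    ring
  rw [h2] at h
  refine h.trans ?_
  have hkey : 2 * L * ((b * (a * (1 - a) + e)) + (e * b) / 3) ≤ (e * b) ^ 2 :=
    numeric_bound ha0 ha1 hL hb hu0 hu2 he
  have hxe : x = e * b := rfl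
  have hVe : V = b * (a * (1 - a) + e) := rfl
  have hLle : L ≤ x ^ 2 / (2 * (V + x / 3)) := by
    rw [le_div_iff₀ (by linarith)]
    rw [hxe, hVe]
    linarith [hkey]
  calc Real.exp (-(x ^ 2 / (2 * (V + x / 3)))) ≤ Real.exp (-L) :=
        Real.exp_le_exp.mpr (by linarith)
    _ = δ / 2 := by
        rw [hLδ, ← Real.log_inv, inv_div, Real.exp_log (by linarith)]

set_option maxHeartbeats 2000000 in
/-- Change-point example: if the distributions in the last `K` periods all equal the
current one (common continuous CDF `F t`), then the pooled empirical `(1-α)`-quantile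
`q̂_{t,K}` over the last `K` periods satisfies, with probability at least `1 - δ`,
`|F_t(q̂_{t,K}) - (1-α)| ≤ (5/4)√(2α(1-α)log(2/δ)/B_{t,K}) + 4 log(2/δ)/B_{t,K}`. -/
theorem stmt16 {Ω : Type*} [MeasurableSpace Ω] (μ : Measure Ω) [IsProbabilityMeasure μ]
    (t : ℕ) (ht : 0 < t) (B : Fin t → ℕ) (hB : ∀ j, 0 < B j)
    (U : ((j : Fin t) × Fin (B j)) → Ω → ℝ)
    (hmeas : ∀ p, Measurable (U p))
    (hind : iIndepFun U μ)
    (F : Fin t → ℝ → ℝ)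
    (hF : ∀ (j : Fin t) (i : Fin (B j)) (s : ℝ),
      F j s = (μ {ω | U ⟨j, i⟩ ω ≤ s}).toReal)
    (hcont : ∀ j, Continuous (F j))
    (K : ℕ) (hK1 : 1 ≤ K) (hKt : K ≤ t - 1)
    (hstat : ∀ j : Fin t, t - K ≤ j.val →
      F j = F ⟨t - 1, Nat.sub_lt ht Nat.one_pos⟩)
    (α δ : ℝ) (hα : α ∈ Set.Ioo (0 : ℝ) 1) (hδ : δ ∈ Set.Ioo (0 : ℝ) 1)
    (BtK : ℝ)
    (hBtK : BtK = ((Finset.univ.filter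
      (fun p : (j : Fin t) × Fin (B j) => t - K ≤ p.1.val)).card : ℝ)) :
    1 - δ ≤ (μ {ω |
      |F ⟨t - 1, Nat.sub_lt ht Nat.one_pos⟩
          (Qminus (1 - α) (fun s => ((Finset.univ.filter
            (fun p : (j : Fin t) × Fin (B j) =>
              t - K ≤ p.1.val ∧ U p ω ≤ s)).card : ℝ) / BtK))
        - (1 - α)| ≤
      (5 / 4) * Real.sqrt (2 * α * (1 - α) * Real.log (2 / δ) / BtK) +
        4 * Real.log (2 / δ) / BtK}).toReal := by
  obtain ⟨hα0, hα1⟩ := hα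
  obtain ⟨hδ0, hδ1⟩ := hδ
  set G : ℝ → ℝ := F ⟨t - 1, Nat.sub_lt ht Nat.one_pos⟩ with hGdef
  set S : Finset ((j : Fin t) × Fin (B j)) :=
    Finset.univ.filter (fun p => t - K ≤ p.1.val) with hSdef
  set L : ℝ := Real.log (2 / δ) with hLdef
  set u : ℝ := Real.sqrt (2 * α * (1 - α) * L / BtK) with hudef
  set e : ℝ := (5 / 4) * u + 4 * L / BtK with hedef
  -- basic positivity facts
  have j₀ : Fin t := ⟨t - 1, Nat.sub_lt ht Nat.one_pos⟩
  have hj₀mem : (⟨⟨t - 1, Nat.sub_lt ht Nat.one_pos⟩, ⟨0, hB _⟩⟩ :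
      (j : Fin t) × Fin (B j)) ∈ S := by
    rw [hSdef]
    refine Finset.mem_filter.mpr ⟨Finset.mem_univ _, ?_⟩
    exact Nat.sub_le_sub_left hK1 t
  have hScard : 0 < S.card := Finset.card_pos.mpr ⟨_, hj₀mem⟩
  have hB1 : (1 : ℝ) ≤ BtK := by
    rw [hBtK]
    exact_mod_cast hScard
  have hB0 : (0 : ℝ) < BtK := by linarith
  have hL : 0 < L := Real.log_pos (by rw [lt_div_iff₀ hδ0]; linarith)
  have hu0 : 0 ≤ u := Real.sqrt_nonneg _
  have hu2 : u ^ 2 = 2 * α * (1 - α) * L / BtK := by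
    rw [hudef]
    refine Real.sq_sqrt ?_
    have h1 : 0 ≤ α * (1 - α) := by nlinarith
    have h2 : 0 ≤ 2 * α * (1 - α) * L := by nlinarith
    positivity
  have he0 : 0 < e := by
    have h4 : 0 < 4 * L / BtK := by positivity
    rw [hedef]; nlinarith
  have hcardB : (S.card : ℝ) = BtK := hBtK.symm
  -- facts about G
  have hGs : ∀ s, G s = (μ {ω | U ⟨⟨t - 1, Nat.sub_lt ht Nat.one_pos⟩, ⟨0, hB _⟩⟩ ω ≤ s}).toReal :=
    fun s => hF _ _ s
  have hGcont : Continuous G := hcont _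
  have hGmono : Monotone G := by
    intro s1 s2 h
    rw [hGs, hGs]
    exact ENNReal.toReal_mono (measure_ne_top μ _)
      (measure_mono (fun ω hω => le_trans hω h))
  have hG1 : ∀ s, G s ≤ 1 := by
    intro s
    rw [hGs]
    exact ENNReal.toReal_le_of_le_ofReal zero_le_one (by simpa using prob_le_one)
  have hG0 : ∀ s, 0 ≤ G s := fun s => by rw [hGs]; exact ENNReal.toReal_nonneg
  have hGp : ∀ p ∈ S, ∀ s, (μ {ω | U p ω ≤ s}).toReal = G s := by
    intro p hp s
    have h1 := hF p.1 p.2 s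
    rw [Sigma.eta] at h1
    have hp2 : t - K ≤ p.1.val := by
      have := hp
      rw [hSdef, Finset.mem_filter] at this
      exact this.2
    rw [← h1, hstat p.1 hp2, hGdef]
  -- the empirical quantile
  have hfilter : ∀ (ω : Ω) (s : ℝ), (Finset.univ.filter
      (fun p : (j : Fin t) × Fin (B j) => t - K ≤ p.1.val ∧ U p ω ≤ s))
      = S.filter (fun p => U p ω ≤ s) := by
    intro ω s
    rw [hSdef, Finset.filter_filter]
  set Fh : Ω → ℝ → ℝ := fun ω s => ((S.filter (fun p => U p ω ≤ s)).card : ℝ) / BtK with hFhdef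
  set qh : Ω → ℝ := fun ω => sInf {s | 1 - α ≤ Fh ω s} with hqhdef
  have hqhat : ∀ ω : Ω, Qminus (1 - α) (fun s => ((Finset.univ.filter
      (fun p : (j : Fin t) × Fin (B j) =>
        t - K ≤ p.1.val ∧ U p ω ≤ s)).card : ℝ) / BtK) = qh ω := by
    intro ω
    rw [Qminus, hqhdef]
    congr 1
    ext s
    rw [Set.mem_setOf_eq, Set.mem_setOf_eq, hfilter ω s, hFhdef]
  have hFhmono : ∀ ω, Monotone (Fh ω) := by
    intro ω s1 s2 h
    rw [hFhdef]
    have hcle : ((S.filter (fun p => U p ω ≤ s1)).card : ℝ)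
        ≤ ((S.filter (fun p => U p ω ≤ s2)).card : ℝ) := by
      exact_mod_cast Finset.card_le_card (by
        intro p hp
        rw [Finset.mem_filter] at hp ⊢
        exact ⟨hp.1, hp.2.trans h⟩)
    exact div_le_div_of_nonneg_right hcle hB0.le

  have hQne : ∀ ω, {s | 1 - α ≤ Fh ω s}.Nonempty := by
    intro ω
    have hSne : (S.image (fun p => U p ω)).Nonempty :=
      ⟨_, Finset.mem_image_of_mem _ hj₀mem⟩
    refine ⟨(S.image (fun p => U p ω)).max' hSne, ?_⟩
    have hall : S.filter (fun p => U p ω ≤ (S.image (fun p => U p ω)).max' hSne) = S :=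
      Finset.filter_true_of_mem (fun p hp =>
        Finset.le_max' _ _ (Finset.mem_image_of_mem (fun p => U p ω) hp))
    simp only [Set.mem_setOf_eq, hFhdef]
    rw [hall, hcardB, div_self (ne_of_gt hB0)]
    linarith
  have hQbdd : ∀ ω, BddBelow {s | 1 - α ≤ Fh ω s} := by
    intro ω
    have hSne : (S.image (fun p => U p ω)).Nonempty :=
      ⟨_, Finset.mem_image_of_mem _ hj₀mem⟩
    refine ⟨(S.image (fun p => U p ω)).min' hSne, ?_⟩
    intro s hs
    simp only [Set.mem_setOf_eq, hFhdef] at hs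
    have hpos : 0 < ((S.filter (fun p => U p ω ≤ s)).card : ℝ) := by
      by_contra h
      push_neg at h
      have : ((S.filter (fun p => U p ω ≤ s)).card : ℝ) = 0 := le_antisymm h (by positivity)
      rw [this] at hs
      rw [zero_div] at hs
      linarith
    have : (S.filter (fun p => U p ω ≤ s)).Nonempty := by
      rw [← Finset.card_pos]
      exact_mod_cast hpos
    obtain ⟨p, hp⟩ := this
    rw [Finset.mem_filter] at hp
    exact le_trans (Finset.min'_le _ _ (Finset.mem_image_of_mem _ hp.1)) hp.2
  -- indicator sums
  have hsumind : ∀ (ω : Ω) (c : ℝ), ∑ p ∈ S, ({ω' | U p ω' ≤ c}).indicator (fun _ => (1:ℝ)) ω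
      = ((S.filter (fun p => U p ω ≤ c)).card : ℝ) := by
    intro ω c
    rw [← Finset.sum_boole]
    exact Finset.sum_congr rfl (fun p _ => by
      simp [Set.indicator_apply, Set.mem_setOf_eq])
  -- the generic Chernoff tail bound
  have hchern : ∀ (εs c q : ℝ), (εs = 1 ∨ εs = -1) →
      (∀ p ∈ S, (μ {ω | U p ω ≤ c}).toReal = q) → q * (1 - q) ≤ α * (1 - α) + e →
      (μ {ω | e * BtK ≤ ∑ p ∈ S,
        εs * (({ω' | U p ω' ≤ c}).indicator (fun _ => (1:ℝ)) ω - q)}).toReal ≤ δ / 2 := by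
    intro εs c q hεs hq hv
    exact chernoff_half U hmeas hind S c q εs hεs hq α L BtK u e δ hα0 hα1 hL hδ0
      hB1 hcardB hu0 hu2 hedef hLdef hv
  -- upper deviation set
  have hplus : μ {ω | 1 - α + e < G (qh ω)} ≤ ENNReal.ofReal (δ / 2) := by
    by_cases hcase : 1 - α + e < 1
    · obtain ⟨c, hc⟩ := cdf_surjective μ _ (hmeas _) G hGs hGcont (1 - α + e)
        (by linarith) hcase
      have hq : ∀ p ∈ S, (μ {ω | U p ω ≤ c}).toReal = 1 - α + e := by
        intro p hp
        rw [hGp p hp c, hc]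
      have hsub : {ω | 1 - α + e < G (qh ω)} ⊆ {ω | e * BtK ≤ ∑ p ∈ S,
          (-1 : ℝ) * (({ω' | U p ω' ≤ c}).indicator (fun _ => (1:ℝ)) ω - (1 - α + e))} := by
        intro ω hω
        rw [Set.mem_setOf_eq] at hω ⊢
        have hqc : c < qh ω := by
          by_contra hcon
          push_neg at hcon
          have := hGmono hcon
          rw [hc] at this
          linarith
        have hnotin : ¬ (1 - α ≤ Fh ω c) := by
          intro hin
          exact absurd (csInf_le (hQbdd ω) hin) (not_le.mpr hqc)
        push_neg at hnotin
        have hN : ((S.filter (fun p => U p ω ≤ c)).card : ℝ) < (1 - α) * BtK := by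
          simp only [hFhdef] at hnotin
          exact (div_lt_iff₀ hB0).mp hnotin
        have hsum : ∑ p ∈ S, (-1 : ℝ) * (({ω' | U p ω' ≤ c}).indicator (fun _ => (1:ℝ)) ω
            - (1 - α + e)) = (1 - α + e) * BtK
              - ((S.filter (fun p => U p ω ≤ c)).card : ℝ) := by
          rw [Finset.sum_congr rfl (fun p _ => by ring :
            ∀ p ∈ S, (-1 : ℝ) * (({ω' | U p ω' ≤ c}).indicator (fun _ => (1:ℝ)) ω
              - (1 - α + e)) = (1 - α + e) - ({ω' | U p ω' ≤ c}).indicator (fun _ => (1:ℝ)) ω)]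
          rw [Finset.sum_sub_distrib, hsumind ω c, Finset.sum_const, nsmul_eq_mul, hcardB]
          ring
        rw [hsum]
        linarith
      refine le_trans (measure_mono hsub) ?_
      refine (ENNReal.le_ofReal_iff_toReal_le (measure_ne_top μ _) (by linarith)).mpr ?_
      exact hchern (-1) c (1 - α + e) (Or.inr rfl) hq (by nlinarith)
    · have hempty : {ω | 1 - α + e < G (qh ω)} = ∅ := by
        rw [Set.eq_empty_iff_forall_notMem]
        intro ω hω
        rw [Set.mem_setOf_eq] at hω
        have := hG1 (qh ω)
        push_neg at hcase
        linarith
      rw [hempty, measure_empty]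
      positivity
  -- lower deviation set
  have hminus : μ {ω | G (qh ω) < 1 - α - e} ≤ ENNReal.ofReal (δ / 2) := by
    by_cases hcase : 0 < 1 - α - e
    · obtain ⟨c, hc⟩ := cdf_surjective μ _ (hmeas _) G hGs hGcont (1 - α - e)
        hcase (by linarith)
      have hq : ∀ p ∈ S, (μ {ω | U p ω ≤ c}).toReal = 1 - α - e := by
        intro p hp
        rw [hGp p hp c, hc]
      have hsub : {ω | G (qh ω) < 1 - α - e} ⊆ {ω | e * BtK ≤ ∑ p ∈ S,
          (1 : ℝ) * (({ω' | U p ω' ≤ c}).indicator (fun _ => (1:ℝ)) ω - (1 - α - e))} := by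
        intro ω hω
        rw [Set.mem_setOf_eq] at hω ⊢
        have hqc : qh ω < c := by
          by_contra hcon
          push_neg at hcon
          have := hGmono hcon
          rw [hc] at this
          linarith
        obtain ⟨s, hsQ, hsc⟩ := exists_lt_of_csInf_lt (hQne ω) hqc
        rw [Set.mem_setOf_eq] at hsQ
        have hFc : 1 - α ≤ Fh ω c := le_trans hsQ (hFhmono ω hsc.le)
        have hN : (1 - α) * BtK ≤ ((S.filter (fun p => U p ω ≤ c)).card : ℝ) := by
          simp only [hFhdef] at hFc
          exact (le_div_iff₀ hB0).mp hFc
        have hsum : ∑ p ∈ S, (1 : ℝ) * (({ω' | U p ω' ≤ c}).indicator (fun _ => (1:ℝ)) ω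
            - (1 - α - e)) = ((S.filter (fun p => U p ω ≤ c)).card : ℝ)
              - (1 - α - e) * BtK := by
          rw [Finset.sum_congr rfl (fun p _ => by ring :
            ∀ p ∈ S, (1 : ℝ) * (({ω' | U p ω' ≤ c}).indicator (fun _ => (1:ℝ)) ω
              - (1 - α - e)) = ({ω' | U p ω' ≤ c}).indicator (fun _ => (1:ℝ)) ω - (1 - α - e))]
          rw [Finset.sum_sub_distrib, hsumind ω c, Finset.sum_const, nsmul_eq_mul, hcardB]
          ring
        rw [hsum]
        linarith
      refine le_trans (measure_mono hsub) ?_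
      refine (ENNReal.le_ofReal_iff_toReal_le (measure_ne_top μ _) (by linarith)).mpr ?_
      exact hchern 1 c (1 - α - e) (Or.inl rfl) hq (by nlinarith)
    · have hempty : {ω | G (qh ω) < 1 - α - e} = ∅ := by
        rw [Set.eq_empty_iff_forall_notMem]
        intro ω hω
        rw [Set.mem_setOf_eq] at hω
        have := hG0 (qh ω)
        push_neg at hcase
        linarith
      rw [hempty, measure_empty]
      positivity
  -- assemble
  simp only [hqhat]
  set E : Set Ω := {ω | |G (qh ω) - (1 - α)| ≤ e} with hEdef
  have hcompl : Eᶜ ⊆ {ω | 1 - α + e < G (qh ω)} ∪ {ω | G (qh ω) < 1 - α - e} := by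
    intro ω hω
    rw [Set.mem_compl_iff, hEdef, Set.mem_setOf_eq, not_le] at hω
    rcases lt_abs.mp hω with h1 | h1
    · exact Or.inl (by rw [Set.mem_setOf_eq]; linarith)
    · exact Or.inr (by rw [Set.mem_setOf_eq]; linarith)
  have hEc : μ Eᶜ ≤ ENNReal.ofReal δ := by
    refine le_trans (measure_mono hcompl) ?_
    refine le_trans (measure_union_le _ _) ?_
    refine le_trans (add_le_add hplus hminus) ?_
    rw [← ENNReal.ofReal_add (by linarith) (by linarith)]
    norm_num
  have hE1 : (1 : ℝ≥0∞) ≤ μ E + μ Eᶜ := by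
    rw [← measure_univ (μ := μ)]
    exact le_trans (measure_mono (by rw [Set.union_compl_self])) (measure_union_le E Eᶜ)
  have hE2 : (1 : ℝ≥0∞) - ENNReal.ofReal δ ≤ μ E := by
    rw [tsub_le_iff_right]
    exact le_trans hE1 (add_le_add_right hEc (μ E))
  have h3 : ((1 : ℝ≥0∞) - ENNReal.ofReal δ).toReal = 1 - δ := by
    rw [ENNReal.toReal_sub_of_le (ENNReal.ofReal_le_one.mpr hδ1.le) (by simp)]
    rw [ENNReal.toReal_ofReal hδ0.le, ENNReal.toReal_one]
  calc (1 : ℝ) - δ = ((1 : ℝ≥0∞) - ENNReal.ofReal δ).toReal := h3.symm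
    _ ≤ (μ E).toReal := ENNReal.toReal_mono (measure_ne_top μ E) hE2
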